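/- Let X be a compact Hausdorff space with a continuous action α of a semigroup S which is expansive with expansivity entourage E and has the pseudo-orbit tracing property. Then there exists a finite set K ⊆ S and entourage W of X such that for every continuous action β of S on X that is E-expansive and satisfies (α_k(x), β_k(x)) ∈ W for all k ∈ K, x ∈ X, there exists an injective continuous map h : X → X with α_s ∘ h = h ∘ β_s for all s ∈ S. -/

import Mathlib

/-- If `α` is an expansive continuous semigroup action with expansivity entourage `E`
having the pseudo-orbit tracing property, then there exist a finite `K ⊆ S` and an
entourage `W` such that every `E`-expansive continuous action `β` with
`(α_k x, β_k x) ∈ W` for all `k ∈ K`, `x ∈ X` admits an injective continuous map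
`h : X → X` with `α_s ∘ h = h ∘ β_s` for all `s ∈ S`. -/
theorem stmt_4 {S X : Type*} [Semigroup S] [UniformSpace X] [CompactSpace X] [T2Space X]
    (α : S → X → X) (hαact : ∀ (s t : S) (x : X), α (s * t) x = α s (α t x))
    (hαcont : ∀ s : S, Continuous (α s))
    (E : Set (X × X)) (hE : E ∈ uniformity X)
    (hexp : ∀ x y : X, x ≠ y → ∃ s : S, (α s x, α s y) ∉ E)
    (hpotp : ∀ U ∈ uniformity X, ∃ K : Finset S, ∃ V ∈ uniformity X,
        ∀ xs : S → X, (∀ k ∈ K, ∀ s : S, (α k (xs s), xs (k * s)) ∈ V) →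
          ∃ x : X, ∀ s : S, (α s x, xs s) ∈ U) :
    ∃ K : Finset S, ∃ W ∈ uniformity X,
      ∀ β : S → X → X, (∀ (s t : S) (x : X), β (s * t) x = β s (β t x)) →
        (∀ s : S, Continuous (β s)) →
        (∀ x y : X, x ≠ y → ∃ s : S, (β s x, β s y) ∉ E) →
        (∀ k ∈ K, ∀ x : X, (α k x, β k x) ∈ W) →
        ∃ h : X → X, Function.Injective h ∧ Continuous h ∧
          ∀ (s : S) (x : X), α s (h x) = h (β s x) := by
  -- get T with T ∘ T ⊆ E
  obtain ⟨T, hT, hTcomp⟩ := comp_mem_uniformity_sets hE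
  -- get closed U₀ ⊆ T
  obtain ⟨U₀, ⟨hU₀, hU₀closed⟩, hU₀T⟩ := (uniformity_hasBasis_closed (α := X)).mem_iff.mp hT
  -- symmetrize
  set U : Set (X × X) := SetRel.symmetrize U₀ with hUdef
  have hU : U ∈ uniformity X := symmetrize_mem_uniformity hU₀
  have hUsymm : SetRel.IsSymm U := SetRel.isSymm_symmetrize
  have hUT : U ⊆ T := (SetRel.symmetrize_subset_self (R := U₀)).trans hU₀T
  have hUclosed : IsClosed U := hU₀closed.inter (hU₀closed.preimage continuous_swap)
  have hUE : ∀ {a b c : X}, (a, b) ∈ U → (b, c) ∈ U → (a, c) ∈ E := by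
    intro a b c h1 h2
    exact hTcomp ⟨b, hUT h1, hUT h2⟩
  obtain ⟨K, V, hV, htrace⟩ := hpotp U hU
  refine ⟨K, V, hV, ?_⟩
  intro β hβact hβcont hβexp hβW
  -- every orbit of β is a pseudo-orbit of α
  have hpo : ∀ x : X, ∃ y : X, ∀ s : S, (α s y, β s x) ∈ U := by
    intro x
    apply htrace (fun s => β s x)
    intro k hk s
    rw [hβact]
    exact hβW k hk (β s x)
  -- uniqueness of tracing points
  have huniq : ∀ (c : S → X) (y y' : X),
      (∀ s, (α s y, c s) ∈ U) → (∀ s, (α s y', c s) ∈ U) → y = y' := by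
    intro c y y' hy hy'
    by_contra hne
    obtain ⟨s, hs⟩ := hexp y y' hne
    exact hs (hUE (hy s) (hUsymm.symm _ _ (hy' s)))
  choose h hh using hpo
  have hinj : Function.Injective h := by
    intro x y hxy
    by_contra hne
    obtain ⟨s, hs⟩ := hβexp x y hne
    have h1 := hh x s
    have h2 := hh y s
    rw [hxy] at h1
    exact hs (hUE (hUsymm.symm _ _ h1) h2)
  have hequiv : ∀ (s : S) (x : X), α s (h x) = h (β s x) := by
    intro s x
    apply huniq (fun t => β t (β s x))
    · intro t
      rw [← hαact, ← hβact]
      exact hh x (t * s)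
    · intro t
      exact hh (β s x) t
  refine ⟨h, hinj, ?_, hequiv⟩
  -- continuity via closed graph + compactness
  have hGclosed : IsClosed {p : X × X | ∀ s : S, (α s p.2, β s p.1) ∈ U} := by
    have : {p : X × X | ∀ s : S, (α s p.2, β s p.1) ∈ U} =
        ⋂ s : S, (fun p : X × X => (α s p.2, β s p.1)) ⁻¹' U := by
      ext p; simp
    rw [this]
    exact isClosed_iInter fun s =>
      hUclosed.preimage (((hαcont s).comp continuous_snd).prodMk
        ((hβcont s).comp continuous_fst))
  have hgraph : ∀ p : X × X, p ∈ {p : X × X | ∀ s : S, (α s p.2, β s p.1) ∈ U} ↔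
      h p.1 = p.2 := by
    intro p
    constructor
    · intro hp
      exact huniq (fun s => β s p.1) (h p.1) p.2 (hh p.1) hp
    · intro he
      intro s
      rw [← he]
      exact hh p.1 s
  rw [continuous_iff_isClosed]
  intro C hC
  have : h ⁻¹' C = Prod.fst '' ({p : X × X | ∀ s : S, (α s p.2, β s p.1) ∈ U}
      ∩ Set.univ ×ˢ C) := by
    ext x
    simp only [Set.mem_preimage, Set.mem_image, Set.mem_inter_iff, Set.mem_prod,
      Set.mem_univ, true_and]
    constructor
    · intro hx
      exact ⟨(x, h x), ⟨(hgraph (x, h x)).mpr rfl, hx⟩, rfl⟩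
    · rintro ⟨⟨a, b⟩, ⟨hab, hb⟩, rfl⟩
      rwa [(hgraph (a, b)).mp hab]
  rw [this]
  exact (((hGclosed.inter (isClosed_univ.prod hC)).isCompact).image
    continuous_fst).isClosed
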